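/- (Quantitative cost decrease near a non-stationary point.) Assume g₀ and all g_i are differentiable with Lipschitz continuous gradients on ℝ^n. Let z̄ ∈ ℝ^n and suppose there exist a unit vector s ∈ ℝ^n, κ > 0, and ε₀ > 0 such that J(z + δ s) − J(z) < −(κ/2)δ for all z with ‖z − z̄‖ < ε₀ and all δ ∈ (0, ε₀]. Then for every c ∈ (0, 1) there exist r̄ > 0 and ε̄ > 0 such that for every z with ‖z − z̄‖ < ε̄, every r ∈ (0, r̄], and every d* minimizing L_z over the closed ball {d : ‖d‖ ≤ r}, one has J(z) − L_z(d*) ≥ c (κ/2) r and J(z) − J(z + d*) ≥ c (κ/2) r. -/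
import Mathlib

open RealInnerProductSpace Metric Filter Topology Asymptotics

lemma taylor_bound' {E : Type*} [NormedAddCommGroup E] [InnerProductSpace ℝ E]
    [CompleteSpace E]
    (f : E → ℝ) (hf : Differentiable ℝ f) {K : NNReal}
    (hK : LipschitzWith K (gradient f)) (z d : E) :
    |f (z + d) - f z - ⟪gradient f z, d⟫| ≤ K * ‖d‖ * ‖d‖ := by
  set φ : E → ℝ := fun x => f x - ⟪gradient f z, x⟫ with hφ
  set T := InnerProductSpace.toDual ℝ E
  have hφ' : ∀ x : E, HasFDerivAt φ ((T (gradient f x)) - (T (gradient f z))) x := by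
    intro x
    exact ((hf x).hasGradientAt.hasFDerivAt).sub ((T (gradient f z)).hasFDerivAt)
  have hbound : ∀ x ∈ closedBall z ‖d‖,
      ‖(T (gradient f x)) - (T (gradient f z))‖ ≤ (K : ℝ) * ‖d‖ := by
    intro x hx
    rw [← map_sub, T.norm_map]
    calc ‖gradient f x - gradient f z‖ ≤ K * ‖x - z‖ := by
          simpa [dist_eq_norm] using hK.dist_le_mul x z
      _ ≤ K * ‖d‖ :=
          mul_le_mul_of_nonneg_left (mem_closedBall_iff_norm.mp hx) K.2
  have h1 : ‖φ (z + d) - φ z‖ ≤ (K : ℝ) * ‖d‖ * ‖(z + d) - z‖ :=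
    (convex_closedBall _ _).norm_image_sub_le_of_norm_hasFDerivWithin_le
      (fun x _ => (hφ' x).hasFDerivWithinAt) hbound
      (mem_closedBall_self (norm_nonneg d))
      (by simp [mem_closedBall_iff_norm])
  have h2 : φ (z + d) - φ z = f (z + d) - f z - ⟪gradient f z, d⟫ := by
    simp [hφ, inner_add_right]; ring
  rw [h2] at h1
  simpa using h1

noncomputable def Jpen {n : ℕ} {ι : Type*} (E I : Finset ι)
    (g₀ : EuclideanSpace ℝ (Fin n) → ℝ) (g : ι → EuclideanSpace ℝ (Fin n) → ℝ)
    (lam : ι → ℝ) (z : EuclideanSpace ℝ (Fin n)) : ℝ :=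
  g₀ z + ∑ i ∈ E, lam i * |g i z| + ∑ i ∈ I, lam i * max 0 (g i z)

noncomputable def Lpen {n : ℕ} {ι : Type*} (E I : Finset ι)
    (g₀ : EuclideanSpace ℝ (Fin n) → ℝ) (g : ι → EuclideanSpace ℝ (Fin n) → ℝ)
    (lam : ι → ℝ) (z d : EuclideanSpace ℝ (Fin n)) : ℝ :=
  g₀ z + ⟪gradient g₀ z, d⟫ +
    ∑ i ∈ E, lam i * |g i z + ⟪gradient (g i) z, d⟫| +
    ∑ i ∈ I, lam i * max 0 (g i z + ⟪gradient (g i) z, d⟫)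

theorem stmt5 {n : ℕ} {ι : Type*} [DecidableEq ι] (E I : Finset ι) (hEI : Disjoint E I)
    (g₀ : EuclideanSpace ℝ (Fin n) → ℝ) (g : ι → EuclideanSpace ℝ (Fin n) → ℝ)
    (lam : ι → ℝ) (hlam : ∀ i ∈ E ∪ I, 0 ≤ lam i)
    (hg₀ : Differentiable ℝ g₀) (hg₀' : ∃ K : NNReal, LipschitzWith K (gradient g₀))
    (hg : ∀ i ∈ E ∪ I, Differentiable ℝ (g i))
    (hg' : ∀ i ∈ E ∪ I, ∃ K : NNReal, LipschitzWith K (gradient (g i)))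
    (zbar s : EuclideanSpace ℝ (Fin n)) (hs : ‖s‖ = 1)
    (κ ε₀ : ℝ) (hκ : 0 < κ) (hε₀ : 0 < ε₀)
    (hdesc : ∀ z : EuclideanSpace ℝ (Fin n), ‖z - zbar‖ < ε₀ → ∀ δ : ℝ, 0 < δ → δ ≤ ε₀ →
      Jpen E I g₀ g lam (z + δ • s) - Jpen E I g₀ g lam z < -(κ / 2) * δ) :
    ∀ c : ℝ, 0 < c → c < 1 → ∃ rbar > (0 : ℝ), ∃ εbar > (0 : ℝ),
      ∀ z : EuclideanSpace ℝ (Fin n), ‖z - zbar‖ < εbar →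
        ∀ r : ℝ, 0 < r → r ≤ rbar →
          ∀ dstar ∈ closedBall (0 : EuclideanSpace ℝ (Fin n)) r,
            IsMinOn (Lpen E I g₀ g lam z) (closedBall 0 r) dstar →
            Jpen E I g₀ g lam z - Lpen E I g₀ g lam z dstar ≥ c * (κ / 2) * r ∧
            Jpen E I g₀ g lam z - Jpen E I g₀ g lam (z + dstar) ≥ c * (κ / 2) * r := by
  classical
  obtain ⟨K₀, hK₀⟩ := hg₀'
  set Ki : ι → NNReal := fun i => if h : i ∈ E ∪ I then (hg' i h).choose else 0 with hKidef
  have hKi : ∀ i ∈ E ∪ I, LipschitzWith (Ki i) (gradient (g i)) := by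
    intro i hi
    simp only [hKidef, dif_pos hi]
    exact (hg' i hi).choose_spec
  set M : ℝ := (K₀ : ℝ) + ∑ i ∈ E ∪ I, lam i * (Ki i : ℝ) with hMdef
  have hM0 : 0 ≤ M :=
    add_nonneg K₀.2 (Finset.sum_nonneg fun i hi => mul_nonneg (hlam i hi) (Ki i).2)
  -- Key comparison between J and L
  have hJL : ∀ z d : EuclideanSpace ℝ (Fin n),
      |Jpen E I g₀ g lam (z + d) - Lpen E I g₀ g lam z d| ≤ M * (‖d‖ * ‖d‖) := by
    intro z d
    have hsplit : Jpen E I g₀ g lam (z + d) - Lpen E I g₀ g lam z d =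
        (g₀ (z + d) - g₀ z - ⟪gradient g₀ z, d⟫) +
        (∑ i ∈ E, lam i * (|g i (z + d)| - |g i z + ⟪gradient (g i) z, d⟫|)) +
        (∑ i ∈ I, lam i * (max 0 (g i (z + d)) - max 0 (g i z + ⟪gradient (g i) z, d⟫))) := by
      simp only [Jpen, Lpen, mul_sub, Finset.sum_sub_distrib]
      ring
    rw [hsplit]
    have h0 : |g₀ (z + d) - g₀ z - ⟪gradient g₀ z, d⟫| ≤ (K₀ : ℝ) * (‖d‖ * ‖d‖) := by
      have := taylor_bound' g₀ hg₀ hK₀ z d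
      linarith [this, mul_assoc (K₀ : ℝ) ‖d‖ ‖d‖]
    have hterm : ∀ i ∈ E ∪ I,
        |g i (z + d) - (g i z + ⟪gradient (g i) z, d⟫)| ≤ (Ki i : ℝ) * (‖d‖ * ‖d‖) := by
      intro i hi
      have := taylor_bound' (g i) (hg i hi) (hKi i hi) z d
      have h' : g i (z + d) - (g i z + ⟪gradient (g i) z, d⟫)
          = g i (z + d) - g i z - ⟪gradient (g i) z, d⟫ := by ring
      rw [h']
      linarith [mul_assoc (Ki i : ℝ) ‖d‖ ‖d‖]
    have hE : |∑ i ∈ E, lam i * (|g i (z + d)| - |g i z + ⟪gradient (g i) z, d⟫|)|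
        ≤ ∑ i ∈ E, lam i * (Ki i : ℝ) * (‖d‖ * ‖d‖) := by
      refine (Finset.abs_sum_le_sum_abs _ _).trans (Finset.sum_le_sum fun i hi => ?_)
      have hiU : i ∈ E ∪ I := Finset.mem_union_left _ hi
      rw [abs_mul, abs_of_nonneg (hlam i hiU), mul_assoc]
      refine mul_le_mul_of_nonneg_left ?_ (hlam i hiU)
      exact (abs_abs_sub_abs_le_abs_sub _ _).trans (hterm i hiU)
    have hI : |∑ i ∈ I, lam i * (max 0 (g i (z + d)) - max 0 (g i z + ⟪gradient (g i) z, d⟫))|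
        ≤ ∑ i ∈ I, lam i * (Ki i : ℝ) * (‖d‖ * ‖d‖) := by
      refine (Finset.abs_sum_le_sum_abs _ _).trans (Finset.sum_le_sum fun i hi => ?_)
      have hiU : i ∈ E ∪ I := Finset.mem_union_right _ hi
      rw [abs_mul, abs_of_nonneg (hlam i hiU), mul_assoc]
      refine mul_le_mul_of_nonneg_left ?_ (hlam i hiU)
      refine le_trans ?_ (hterm i hiU)
      rw [max_comm (0:ℝ) (g i (z + d)), max_comm (0:ℝ) (g i z + ⟪gradient (g i) z, d⟫)]
      exact abs_max_sub_max_le_abs _ _ _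
    have hMsum : M * (‖d‖ * ‖d‖) = (K₀ : ℝ) * (‖d‖ * ‖d‖)
        + (∑ i ∈ E, lam i * (Ki i : ℝ) * (‖d‖ * ‖d‖))
        + (∑ i ∈ I, lam i * (Ki i : ℝ) * (‖d‖ * ‖d‖)) := by
      rw [hMdef, Finset.sum_union hEI, ← Finset.sum_mul, ← Finset.sum_mul]
      ring
    rw [hMsum]
    calc |_ + _ + _| ≤ _ := (abs_add_le _ _).trans (add_le_add (abs_add_le _ _) le_rfl)
      _ ≤ _ := add_le_add (add_le_add h0 hE) hI
  clear_value Ki M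
  -- main argument
  intro c hc hc1
  refine ⟨min ε₀ ((1 - c) * κ / (4 * (M + 1))), ?_, ε₀, hε₀, ?_⟩
  · refine lt_min hε₀ (div_pos (mul_pos (by linarith) hκ) (by linarith))
  intro z hz r hr hrle dstar hdball hmin
  have hrε₀ : r ≤ ε₀ := hrle.trans (min_le_left _ _)
  have hrM : r ≤ (1 - c) * κ / (4 * (M + 1)) := hrle.trans (min_le_right _ _)
  have hrs : (r • s : EuclideanSpace ℝ (Fin n)) ∈ closedBall (0 : EuclideanSpace ℝ (Fin n)) r := by
    simp [mem_closedBall_iff_norm, norm_smul, hs, abs_of_pos hr]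
  have hmin' : Lpen E I g₀ g lam z dstar ≤ Lpen E I g₀ g lam z (r • s) := hmin hrs
  have hnrs : ‖(r • s : EuclideanSpace ℝ (Fin n))‖ = r := by
    simp [norm_smul, hs, abs_of_pos hr]
  have h1 : Lpen E I g₀ g lam z (r • s) ≤ Jpen E I g₀ g lam (z + r • s) + M * (r * r) := by
    have := hJL z (r • s)
    rw [hnrs] at this
    have := abs_le.mp this
    linarith [this.1]
  have h2 : Jpen E I g₀ g lam (z + r • s) - Jpen E I g₀ g lam z < -(κ / 2) * r :=
    hdesc z hz r hr hrε₀
  have hkey1 : Jpen E I g₀ g lam z - Lpen E I g₀ g lam z dstar ≥ κ / 2 * r - M * (r * r) := by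
    nlinarith [hmin', h1, h2]
  have hdn : ‖dstar‖ ≤ r := by simpa [mem_closedBall_iff_norm] using hdball
  have h3 : Jpen E I g₀ g lam (z + dstar) ≤ Lpen E I g₀ g lam z dstar + M * (r * r) := by
    have h := (abs_le.mp (hJL z dstar)).2
    have : M * (‖dstar‖ * ‖dstar‖) ≤ M * (r * r) := by
      have := mul_self_le_mul_self (norm_nonneg dstar) hdn
      nlinarith
    linarith
  have hrM' : r * (4 * (M + 1)) ≤ (1 - c) * κ :=
    (le_div_iff₀ (by linarith)).mp hrM
  have hMr2 : 0 ≤ M * (r * r) := mul_nonneg hM0 (by positivity)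
  have hsmall : 2 * M * (r * r) ≤ (1 - c) * (κ / 2) * r := by
    nlinarith [mul_le_mul_of_nonneg_right hrM' hr.le, mul_pos hr hr, hM0]
  constructor
  · linarith [hkey1, hsmall, hMr2]
  · linarith [hkey1, h3, hsmall, hMr2]
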